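/- arXiv:2201.04238 — 3 statements merged into one kernel-verified Lean document; each statement's English description precedes it below -/
import Mathlib

section
/- Let X and Y be linear subspaces of ℝⁿ with dim X = dim Y = m. Then there exist orthonormal bases {x₁, …, xₘ} of X and {y₁, …, yₘ} of Y such that ⟨xᵢ, yⱼ⟩ = 0 for all i ≠ j. -/
open scoped RealInnerProductSpace BigOperators

/-- The Euclidean operator norm of a real matrix: `sup {‖Ax‖ : ‖x‖ = 1}`. -/
noncomputable def opNorm {m n : ℕ} (A : Matrix (Fin m) (Fin n) ℝ) : ℝ :=
  sSup {c : ℝ | ∃ x : EuclideanSpace ℝ (Fin n), ‖x‖ = 1 ∧ c = ‖Matrix.toEuclideanLin A x‖}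

/-- The matrix of the orthogonal projection of `ℝⁿ` onto the subspace `U`. -/
noncomputable def projMatrix {n : ℕ} (U : Submodule ℝ (EuclideanSpace ℝ (Fin n))) :
    Matrix (Fin n) (Fin n) ℝ :=
  Matrix.toEuclideanLin.symm (U.subtype ∘ₗ (U.orthogonalProjectionOnto).toLinearMap)

/-- The minimal stretch of a matrix `A` on a subspace `U`: `inf {‖Ax‖ : x ∈ U, ‖x‖ = 1}`. -/
noncomputable def minStretch {m n : ℕ} (A : Matrix (Fin m) (Fin n) ℝ)
    (U : Submodule ℝ (EuclideanSpace ℝ (Fin n))) : ℝ :=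
  sInf {c : ℝ | ∃ x ∈ U, ‖x‖ = 1 ∧ c = ‖Matrix.toEuclideanLin A x‖}

theorem inner_orthogonalProjection_left_eq_right {E : Type*} [NormedAddCommGroup E]
    [InnerProductSpace ℝ E] {K : Submodule ℝ E} [K.HasOrthogonalProjection] (u v : E) :
    ⟪(K.orthogonalProjectionOnto u : E), v⟫ = ⟪u, (K.orthogonalProjectionOnto v : E)⟫ := by
  exact K.inner_starProjection_left_eq_right u v

/-- Given two `m`-dimensional subspaces `X, Y` of `ℝⁿ`, there exist orthonormal bases
`{x₁, …, xₘ}` of `X` and `{y₁, …, yₘ}` of `Y` such that `⟪xᵢ, yⱼ⟫ = 0` whenever `i ≠ j`. -/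
theorem exists_biorthogonal_orthonormal_bases {n m : ℕ}
    (X Y : Submodule ℝ (EuclideanSpace ℝ (Fin n)))
    (hX : Module.finrank ℝ X = m) (hY : Module.finrank ℝ Y = m) :
    ∃ x y : Fin m → EuclideanSpace ℝ (Fin n),
      Orthonormal ℝ x ∧ Orthonormal ℝ y ∧
      Submodule.span ℝ (Set.range x) = X ∧ Submodule.span ℝ (Set.range y) = Y ∧
      ∀ i j, i ≠ j → (inner ℝ (x i) (y j) : ℝ) = 0 := by
  classical
  set E := EuclideanSpace ℝ (Fin n)
  let pX := X.orthogonalProjectionOnto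
  let pY := Y.orthogonalProjectionOnto
  -- key projection fact: pairing with a member of the subspace ignores the projection
  have h1 : ∀ (w : E) (z : X), ⟪(pX w : E), (z : E)⟫ = ⟪w, (z : E)⟫ := by
    intro w z
    rw [inner_orthogonalProjection_left_eq_right, Submodule.orthogonalProjectionOnto_mem_subspace_eq_self]
  have h1Y : ∀ (w : E) (z : Y), ⟪(pY w : E), (z : E)⟫ = ⟪w, (z : E)⟫ := by
    intro w z
    rw [inner_orthogonalProjection_left_eq_right, Submodule.orthogonalProjectionOnto_mem_subspace_eq_self]
  -- the symmetric operator `S = pX ∘ pY` on `X`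
  let S : X →ₗ[ℝ] X :=
    pX.toLinearMap ∘ₗ Y.subtype ∘ₗ pY.toLinearMap ∘ₗ X.subtype
  have hScoe : ∀ u : X, (S u : E) = (pX ((pY (u : E) : E)) : E) := fun u => rfl
  have hS : S.IsSymmetric := by
    intro u v
    rw [Submodule.coe_inner, Submodule.coe_inner, hScoe, hScoe]
    rw [h1, inner_orthogonalProjection_left_eq_right]
    rw [real_inner_comm, ← h1 _ u]
    exact real_inner_comm _ _
  -- orthonormal eigenbasis of `S` in `X`
  let b := hS.eigenvectorBasis hX
  let μ := hS.eigenvalues hX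
  have hb : ∀ i, S (b i) = (μ i : ℝ) • b i := fun i => hS.apply_eigenvectorBasis hX i
  let x : Fin m → E := fun i => (b i : E)
  have hxon : Orthonormal ℝ x := b.orthonormal.comp_linearIsometry X.subtypeₗᵢ
  have hxspan : Submodule.span ℝ (Set.range x) = X := by
    have hr : Set.range x = X.subtype '' Set.range b := by
      ext w; simp [x, Set.range_comp]
    rw [hr, ← Submodule.map_span]
    have : Submodule.span ℝ (Set.range b) = ⊤ := by
      simpa using b.toBasis.span_eq
    rw [this, Submodule.map_top, Submodule.range_subtype]
  -- the images in Y
  have key : ∀ i j, ⟪x i, ((pY (x j) : E))⟫ = if i = j then μ i else 0 := by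
    intro i j
    rw [← inner_orthogonalProjection_left_eq_right, ← h1 _ (b j), ← hScoe, hb]
    rcases eq_or_ne i j with rfl | hij
    · rw [if_pos rfl, Submodule.coe_smul, real_inner_smul_left]
      have h2 : ⟪x i, x i⟫ = 1 := by
        rw [real_inner_self_eq_norm_mul_norm, hxon.1 i, one_mul]
      change μ i * ⟪x i, x i⟫ = μ i
      rw [h2, mul_one]
    · rw [if_neg hij, Submodule.coe_smul, real_inner_smul_left]
      change μ i * ⟪x i, x j⟫ = 0
      rw [hxon.2 hij, mul_zero]
  have keyg : ∀ i j, ⟪((pY (x i) : E)), ((pY (x j) : E))⟫ = if i = j then μ i else 0 := by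
    intro i j
    rw [inner_orthogonalProjection_left_eq_right,
      Submodule.orthogonalProjectionOnto_mem_subspace_eq_self]
    exact key i j
  -- normalized images, extended to an orthonormal basis of Y
  let v : Fin m → Y := fun i => ‖(pY (x i) : E)‖⁻¹ • pY (x i)
  let s : Set (Fin m) := {i | (pY (x i) : Y) ≠ 0}
  have hvnorm : ∀ i ∈ s, ‖v i‖ = 1 := by
    intro i hi
    have hne : ‖(pY (x i) : E)‖ ≠ 0 := by
      simp only [ne_eq, norm_eq_zero, Submodule.coe_eq_zero]
      exact hi
    simp only [v, norm_smul, norm_inv, norm_norm]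
    rw [show ‖pY (x i)‖ = ‖(pY (x i) : E)‖ from rfl]
    exact inv_mul_cancel₀ hne
  have hvinner : ∀ i j, i ≠ j → (inner ℝ (v i) (v j) : ℝ) = 0 := by
    intro i j hij
    simp only [v, inner_smul_left, inner_smul_right, Submodule.coe_inner,
      Submodule.coe_smul]
    have := keyg i j
    rw [if_neg hij] at this
    simp [this]
  have hvon : Orthonormal ℝ (s.restrict v) := by
    constructor
    · rintro ⟨i, hi⟩; exact hvnorm i hi
    · rintro ⟨i, hi⟩ ⟨j, hj⟩ hne
      exact hvinner i j (fun h => hne (Subtype.ext h))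
  obtain ⟨b', hb'⟩ := hvon.exists_orthonormalBasis_extension_of_card_eq
    (by simpa using hY)
  let y : Fin m → E := fun i => (b' i : E)
  have hyon : Orthonormal ℝ y := b'.orthonormal.comp_linearIsometry Y.subtypeₗᵢ
  have hyspan : Submodule.span ℝ (Set.range y) = Y := by
    have hr : Set.range y = Y.subtype '' Set.range b' := by
      ext w; simp [y, Set.range_comp]
    rw [hr, ← Submodule.map_span]
    have : Submodule.span ℝ (Set.range b') = ⊤ := by
      simpa using b'.toBasis.span_eq
    rw [this, Submodule.map_top, Submodule.range_subtype]
  refine ⟨x, y, hxon, hyon, hxspan, hyspan, ?_⟩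
  intro i j hij
  have hxy : ⟪x i, y j⟫ = ⟪((pY (x i) : E)), y j⟫ := by
    rw [h1Y]
  rw [hxy]
  by_cases hzero : (pY (x i) : Y) = 0
  · rw [hzero]; simp
  · have hiv : b' i = v i := hb' i hzero
    have hne : ‖(pY (x i) : E)‖ ≠ 0 := by
      simp only [norm_ne_zero_iff]
      intro h; exact hzero (Subtype.ext h)
    have hgi : ((pY (x i) : E)) = ‖(pY (x i) : E)‖ • (v i : E) := by
      simp only [v, Submodule.coe_smul]
      rw [smul_smul]
      field_simp
      rw [one_smul]
    rw [hgi, real_inner_smul_left]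
    have : (inner ℝ (v i) (b' j) : ℝ) = 0 := by
      rw [← hiv]
      exact b'.orthonormal.2 hij
    rw [Submodule.coe_inner] at this
    simp only [y]
    rw [this, mul_zero]
end

section
/- For every n ∈ ℕ and every real λ with 1 ≤ λ ≤ √n, there exists a real n×n matrix A with ‖A eᵢ‖ = 1 for all 1 ≤ i ≤ n and ‖A‖ ≤ λ such that rank(A) < 4n/λ²; consequently, every σ ⊆ {1,…,n} such that the minimal stretch m_{A|U_σ} > 0 (where U_σ = span{eⱼ : j ∈ σ}) satisfies |σ| < 4n/λ². -/
open scoped RealInnerProductSpace BigOperators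

set_option maxHeartbeats 1600000 in
/-- **Optimality of the dimensional bound.** For every `n` and every `1 ≤ λ ≤ √n` there is
an `n × n` matrix `A` with unit-length columns and `‖A‖ ≤ λ` whose rank is less than
`4n/λ²`; consequently any `σ ⊆ {1,…,n}` on whose coordinate subspace `A` has positive
minimal stretch satisfies `|σ| < 4n/λ²`. -/
theorem optimal_dimension_bound (n : ℕ) (lam : ℝ)
    (hlam1 : 1 ≤ lam) (hlamn : lam ≤ Real.sqrt n) :
    ∃ A : Matrix (Fin n) (Fin n) ℝ,
      (∀ i : Fin n, ‖Matrix.toEuclideanLin A (EuclideanSpace.single i (1:ℝ))‖ = 1) ∧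
      opNorm A ≤ lam ∧
      (A.rank : ℝ) < 4 * n / lam ^ 2 ∧
      ∀ σ : Finset (Fin n),
        0 < minStretch A
            (Submodule.span ℝ ((fun j => EuclideanSpace.single j (1:ℝ)) '' (σ : Set (Fin n)))) →
        (σ.card : ℝ) < 4 * n / lam ^ 2 := by
  classical
  have hlam0 : (0:ℝ) < lam := lt_of_lt_of_le one_pos hlam1
  have hsq : Real.sqrt n ^ 2 = (n:ℝ) := Real.sq_sqrt (by positivity)
  have hn : lam ^ 2 ≤ (n:ℝ) := by nlinarith [Real.sqrt_nonneg (n:ℝ)]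
  have hlam2 : (1:ℝ) ≤ lam ^ 2 := by nlinarith
  have hn1 : (1:ℝ) ≤ (n:ℝ) := le_trans hlam2 hn
  -- the block size
  set k : ℕ := ⌊lam ^ 2⌋₊ with hkdef
  have hk1 : 1 ≤ k := Nat.le_floor (by exact_mod_cast hlam2)
  have hk : 0 < k := hk1
  have hkle : (k:ℝ) ≤ lam ^ 2 := Nat.floor_le (by positivity)
  have hkk : lam ^ 2 < (k:ℝ) + 1 := by
    have h7 := Nat.lt_floor_add_one (lam ^ 2)
    rw [hkdef]
    linarith
  -- the block map
  set g : Fin n → Fin n := fun j =>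
    ⟨k * (j.val / k), lt_of_le_of_lt (by rw [mul_comm]; exact Nat.div_mul_le_self _ _) j.isLt⟩
    with hgdef
  have hg : ∀ j, (g j).val = k * (j.val / k) := fun _ => rfl
  set A : Matrix (Fin n) (Fin n) ℝ := Matrix.of fun i j => if i = g j then (1:ℝ) else 0
    with hA
  set L := Matrix.toEuclideanLin A with hLdef
  -- columns
  have hcol : ∀ j, L (EuclideanSpace.single j (1:ℝ)) = EuclideanSpace.single (g j) (1:ℝ) := by
    intro j
    have h0 : EuclideanSpace.single j (1:ℝ)
        = WithLp.toLp 2 (Pi.single j 1) := rfl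
    rw [hLdef, h0, Matrix.toEuclideanLin_apply_piLp_toLp]
    have h2 : A.mulVec (Pi.single j 1) = Pi.single (g j) (1:ℝ) := by
      rw [Matrix.mulVec_single]
      funext i
      by_cases h : g j = i
      · simp only [hA, Pi.smul_apply, Matrix.col_apply, MulOpposite.smul_eq_mul_unop, MulOpposite.unop_op, Matrix.of_apply]
        rw [if_pos h.symm, one_mul, h, Pi.single_eq_same]
      · simp only [hA, Pi.smul_apply, Matrix.col_apply, MulOpposite.smul_eq_mul_unop, MulOpposite.unop_op, Matrix.of_apply]
        rw [if_neg (fun he => h he.symm), zero_mul]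
        simp [h]
    rw [h2]; rfl
  -- fibers of g have at most k elements
  have hfib : ∀ i, (Finset.univ.filter (fun j => g j = i)).card ≤ k := by
    intro i
    have h5 : (Finset.univ.filter (fun j => g j = i)).card ≤ (Finset.range k).card := by
      refine Finset.card_le_card_of_injOn (fun j => j.val % k) ?_ ?_
      · intro j _
        exact Finset.mem_range.mpr (Nat.mod_lt _ hk)
      · intro a ha b hb hab
        simp only [Finset.mem_coe, Finset.mem_filter] at ha hb
        have hd : a.val / k = b.val / k := by
          have h1 : k * (a.val / k) = k * (b.val / k) := by
            rw [← hg a, ← hg b, ha.2, hb.2]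
          exact Nat.eq_of_mul_eq_mul_left hk h1
        have : a.val = b.val := by
          simp only at hab
          rw [← Nat.div_add_mod a.val k, ← Nat.div_add_mod b.val k, hd, hab]
        exact Fin.ext this
    simpa using h5
  -- the image of g is small
  set T := Finset.image g Finset.univ with hTdef
  have hT : T.card ≤ n / k + 1 := by
    have h5 : T.card ≤ (Finset.range (n / k + 1)).card := by
      refine Finset.card_le_card_of_injOn (fun t => t.val / k) ?_ ?_
      · intro t _
        exact Finset.mem_range.mpr (Nat.lt_succ_of_le (Nat.div_le_div_right t.isLt.le))
      · intro a ha b hb hab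
        simp only [hTdef, Finset.coe_image, Set.mem_image, Finset.mem_coe] at ha hb
        obtain ⟨ja, -, rfl⟩ := ha
        obtain ⟨jb, -, rfl⟩ := hb
        have hab' : k * (ja.val / k) / k = k * (jb.val / k) / k := hab
        rw [Nat.mul_div_cancel_left _ hk, Nat.mul_div_cancel_left _ hk] at hab'
        exact Fin.ext (by rw [hg, hg, hab'])
    simpa using h5
  -- the key numeric bound
  have hbound : ((n / k + 1 : ℕ):ℝ) < 4 * (n:ℝ) / lam ^ 2 := by
    have hd : ((n / k : ℕ):ℝ) * (k:ℝ) ≤ (n:ℝ) := by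
      exact_mod_cast Nat.cast_le.mpr (Nat.div_mul_le_self n k)
    have hk1' : (1:ℝ) ≤ (k:ℝ) := by exact_mod_cast hk1
    have hdnn : (0:ℝ) ≤ ((n / k : ℕ):ℝ) := Nat.cast_nonneg _
    rw [lt_div_iff₀ (by positivity : (0:ℝ) < lam ^ 2)]
    push_cast
    nlinarith [mul_le_mul_of_nonneg_left hn hdnn, mul_le_mul_of_nonneg_left hkk.le hdnn]
  -- the operator norm bound
  have hnorm : ∀ x : EuclideanSpace ℝ (Fin n), ‖L x‖ ≤ lam * ‖x‖ := by
    intro x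
    have hL : ∀ i, L x i = ∑ j ∈ Finset.univ.filter (fun j => g j = i), x j := by
      intro i
      have h1 : L x i = ∑ j, A i j * x j := rfl
      rw [h1, Finset.sum_filter]
      refine Finset.sum_congr rfl fun j _ => ?_
      by_cases h : g j = i
      · simp [hA, h]
      · simp only [hA, Matrix.of_apply]
        rw [if_neg (fun he => h he.symm), zero_mul]
        simp [h]
    have hxsq : ‖x‖ ^ 2 = ∑ j, (x j) ^ 2 := by
      rw [EuclideanSpace.norm_eq, Real.sq_sqrt (by positivity)]
      simp [sq_abs]
    have hLsq : ‖L x‖ ^ 2 = ∑ i, (L x i) ^ 2 := by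
      rw [EuclideanSpace.norm_eq, Real.sq_sqrt (by positivity)]
      simp [sq_abs]
    have key : ‖L x‖ ^ 2 ≤ lam ^ 2 * ‖x‖ ^ 2 := by
      rw [hLsq, hxsq]
      calc ∑ i, (L x i) ^ 2
          ≤ ∑ i, (k:ℝ) * ∑ j ∈ Finset.univ.filter (fun j => g j = i), (x j) ^ 2 := by
            refine Finset.sum_le_sum fun i _ => ?_
            rw [hL i]
            refine le_trans sq_sum_le_card_mul_sum_sq ?_
            refine mul_le_mul_of_nonneg_right ?_ (by positivity)
            exact_mod_cast hfib i
        _ = (k:ℝ) * ∑ j, (x j) ^ 2 := by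
            rw [← Finset.mul_sum, Finset.sum_fiberwise]
        _ ≤ lam ^ 2 * ∑ j, (x j) ^ 2 :=
            mul_le_mul_of_nonneg_right hkle (by positivity)
    calc ‖L x‖ = Real.sqrt (‖L x‖ ^ 2) := by rw [Real.sqrt_sq (norm_nonneg _)]
      _ ≤ Real.sqrt (lam ^ 2 * ‖x‖ ^ 2) := Real.sqrt_le_sqrt key
      _ = lam * ‖x‖ := by rw [← mul_pow, Real.sqrt_sq (by positivity)]
  refine ⟨A, ?_, ?_, ?_, ?_⟩
  · -- unit columns
    intro i
    rw [← hLdef, hcol i, EuclideanSpace.norm_single]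
    exact norm_one
  · -- operator norm
    refine Real.sSup_le ?_ (le_of_lt hlam0)
    rintro c ⟨x, hx1, rfl⟩
    calc ‖Matrix.toEuclideanLin A x‖ ≤ lam * ‖x‖ := hnorm x
      _ = lam := by rw [hx1, mul_one]
  · -- rank bound
    have hrank : A.rank ≤ n / k + 1 := by
      rw [Matrix.rank]
      set s : Finset (Fin n → ℝ) := T.image (fun b => Pi.single b (1:ℝ)) with hsdef
      have hle : LinearMap.range A.mulVecLin ≤ Submodule.span ℝ (s : Set (Fin n → ℝ)) := by
        rw [Matrix.range_mulVecLin]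
        refine Submodule.span_le.mpr ?_
        rintro _ ⟨j, rfl⟩
        refine Submodule.subset_span ?_
        simp only [hsdef, Finset.coe_image, Set.mem_image, Finset.mem_coe]
        refine ⟨g j, Finset.mem_image_of_mem g (Finset.mem_univ j), ?_⟩
        funext i
        simp [hA, Pi.single_apply, Matrix.transpose_apply, eq_comm]
      calc Module.finrank ℝ (LinearMap.range A.mulVecLin)
          ≤ Module.finrank ℝ (Submodule.span ℝ (s : Set (Fin n → ℝ))) :=
            Submodule.finrank_mono hle
        _ ≤ s.card := finrank_span_finset_le_card s
        _ ≤ T.card := Finset.card_image_le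
        _ ≤ n / k + 1 := hT
    calc (A.rank : ℝ) ≤ ((n / k + 1 : ℕ):ℝ) := by exact_mod_cast hrank
      _ < 4 * n / lam ^ 2 := hbound
  · -- the σ statement
    intro σ hpos
    set E := EuclideanSpace ℝ (Fin n)
    set v : Fin n → E := fun j => EuclideanSpace.single j (1:ℝ) with hv
    set U : Submodule ℝ E := Submodule.span ℝ (v '' (σ : Set (Fin n))) with hU
    have hli : LinearIndependent ℝ v := by
      have hco : ⇑(EuclideanSpace.basisFun (Fin n) ℝ) = v := by
        funext i; rw [EuclideanSpace.basisFun_apply]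
      have h9 := (EuclideanSpace.basisFun (Fin n) ℝ).orthonormal.linearIndependent
      rwa [hco] at h9
    have hker : ∀ x ∈ U, L x = 0 → x = 0 := by
      intro x hx hLx
      by_contra hx0
      have hmem : (0:ℝ) ∈ {c : ℝ | ∃ y ∈ U, ‖y‖ = 1 ∧ c = ‖L y‖} := by
        refine ⟨‖x‖⁻¹ • x, U.smul_mem _ hx, norm_smul_inv_norm hx0, ?_⟩
        rw [_root_.map_smul, hLx, smul_zero, norm_zero]
      have hbdd : BddBelow {c : ℝ | ∃ y ∈ U, ‖y‖ = 1 ∧ c = ‖L y‖} := by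
        refine ⟨0, ?_⟩
        rintro c ⟨y, -, -, rfl⟩
        exact norm_nonneg _
      have h8 := csInf_le hbdd hmem
      rw [show sInf {c : ℝ | ∃ y ∈ U, ‖y‖ = 1 ∧ c = ‖L y‖} = minStretch A U from rfl] at h8
      linarith
    set f : U →ₗ[ℝ] E := L ∘ₗ U.subtype with hf
    have hfinj : Function.Injective f := by
      rw [← LinearMap.ker_eq_bot, LinearMap.ker_eq_bot']
      intro m hm
      exact Subtype.ext (hker m.1 m.2 (by simpa [hf] using hm))
    have hcard : Module.finrank ℝ U = σ.card := by
      have him : (v '' (σ : Set (Fin n))) = ((σ.image v : Finset E) : Set E) := by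
        rw [Finset.coe_image]
      have hind : LinearIndependent ℝ ((↑) : ((σ.image v : Finset E) : Set E) → E) := by
        have h1 : ((σ.image v : Finset E) : Set E) ⊆ Set.range v := by
          rw [Finset.coe_image]
          exact Set.image_subset_range _ _
        exact (hli.linearIndepOn_id).mono h1
      rw [hU, him, finrank_span_finset_eq_card hind,
        Finset.card_image_of_injective σ hli.injective]
    set s : Finset E := T.image v with hsdef
    have htop : Submodule.span ℝ (Set.range v) = ⊤ := by
      have hco : ⇑((EuclideanSpace.basisFun (Fin n) ℝ).toBasis) = v := by
        funext i
        rw [OrthonormalBasis.coe_toBasis, EuclideanSpace.basisFun_apply]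
      rw [← hco]
      exact Module.Basis.span_eq _
    have hrange : LinearMap.range f ≤ Submodule.span ℝ (s : Set E) := by
      refine le_trans (LinearMap.range_comp_le_range _ _) ?_
      rw [LinearMap.range_eq_map, ← htop, Submodule.map_span]
      refine Submodule.span_le.mpr ?_
      rintro _ ⟨_, ⟨j, rfl⟩, rfl⟩
      refine Submodule.subset_span ?_
      simp only [hsdef, Finset.coe_image, Set.mem_image, Finset.mem_coe]
      exact ⟨g j, Finset.mem_image_of_mem g (Finset.mem_univ j), (hcol j).symm⟩
    have hσ : σ.card ≤ n / k + 1 := by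
      calc σ.card = Module.finrank ℝ U := hcard.symm
        _ = Module.finrank ℝ (LinearMap.range f) := (LinearMap.finrank_range_of_inj hfinj).symm
        _ ≤ Module.finrank ℝ (Submodule.span ℝ (s : Set E)) := Submodule.finrank_mono hrange
        _ ≤ s.card := finrank_span_finset_le_card s
        _ ≤ T.card := Finset.card_image_le
        _ ≤ n / k + 1 := hT
    calc (σ.card : ℝ) ≤ ((n / k + 1 : ℕ):ℝ) := by exact_mod_cast hσ
      _ < 4 * n / lam ^ 2 := hbound
end

section
/- Let I be an interval of ℝ and A : I → M_{n×m}(ℝ) a continuous matrix function such that there exists c > 0 with m_{A(t)} ≥ c for all t ∈ I (i.e. ‖A(t)x‖ ≥ c‖x‖ for all x ∈ ℝᵐ). Then there exists a continuous matrix function L : I → M_{m×n}(ℝ) such that L(t)A(t) = I_m and ‖L(t)‖ ≤ 1/c for all t ∈ I. -/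
open scoped RealInnerProductSpace BigOperators
open scoped Matrix

private lemma norm_projmat_le {n : ℕ} (P : Matrix (Fin n) (Fin n) ℝ) (hPt : Pᵀ = P)
    (hP2 : P * P = P) (x : EuclideanSpace ℝ (Fin n)) :
    ‖Matrix.toEuclideanLin P x‖ ≤ ‖x‖ := by
  set y := Matrix.toEuclideanLin P x with hy
  have h1 : ⟪y, y⟫ = ⟪x, y⟫ := by
    show dotProduct (P *ᵥ (WithLp.equiv 2 _ x)) (P *ᵥ (WithLp.equiv 2 _ x))
        = dotProduct (P *ᵥ (WithLp.equiv 2 _ x)) (WithLp.equiv 2 _ x)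
    rw [dotProduct_comm (P *ᵥ (WithLp.equiv 2 _ x)) (WithLp.equiv 2 _ x)]
    rw [Matrix.dotProduct_mulVec, ← Matrix.mulVec_transpose, hPt, Matrix.mulVec_mulVec, hP2]
    exact dotProduct_comm _ _
  have h2 : ‖y‖ ^ 2 = ⟪x, y⟫ := by rw [← h1, real_inner_self_eq_norm_sq]
  have h3 : ⟪x, y⟫ ≤ ‖x‖ * ‖y‖ := real_inner_le_norm x y
  nlinarith [norm_nonneg x, norm_nonneg y]

/-- If `A : I → M_{n×m}(ℝ)` is continuous on an interval `I` and satisfies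
`‖A(t)x‖ ≥ c‖x‖` for all `x` (minimal stretch at least `c > 0`), then there is a
continuous left inverse `L : I → M_{m×n}(ℝ)` with `L(t)A(t) = I_m` and `‖L(t)‖ ≤ 1/c`. -/
theorem continuous_left_inverse {n m : ℕ} (I : Set ℝ) (hI : I.OrdConnected)
    (A : ℝ → Matrix (Fin n) (Fin m) ℝ) (hA : ContinuousOn A I)
    (c : ℝ) (hc : 0 < c)
    (hstretch : ∀ t ∈ I, ∀ x : EuclideanSpace ℝ (Fin m),
      c * ‖x‖ ≤ ‖Matrix.toEuclideanLin (A t) x‖) :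
    ∃ L : ℝ → Matrix (Fin m) (Fin n) ℝ,
      ContinuousOn L I ∧
      ∀ t ∈ I, L t * A t = (1 : Matrix (Fin m) (Fin m) ℝ) ∧ opNorm (L t) ≤ 1 / c := by
  classical
  set B : ℝ → Matrix (Fin m) (Fin m) ℝ := fun t => (A t)ᵀ * A t with hB
  -- quadratic form identity
  have hq : ∀ t, ∀ x : Fin m → ℝ, dotProduct x (B t *ᵥ x)
      = ‖Matrix.toEuclideanLin (A t) ((WithLp.equiv 2 (Fin m → ℝ)).symm x)‖ ^ 2 := by
    intro t x
    have h1 : dotProduct x (B t *ᵥ x) = dotProduct (A t *ᵥ x) (A t *ᵥ x) := by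
      rw [hB]
      simp only [← Matrix.mulVec_mulVec, Matrix.dotProduct_mulVec, Matrix.vecMul_transpose]
    rw [h1, ← real_inner_self_eq_norm_sq]
    rfl
  have hpos : ∀ t ∈ I, (B t).PosDef := by
    intro t ht
    refine Matrix.posDef_iff_dotProduct_mulVec.mpr ⟨Matrix.isHermitian_conjTranspose_mul_self (A t), fun x hx => ?_⟩
    rw [star_trivial, hq t x]
    have hxnorm : (0:ℝ) < ‖(WithLp.equiv 2 (Fin m → ℝ)).symm x‖ := by
      rw [norm_pos_iff]
      simpa using hx
    have h4 := hstretch t ht ((WithLp.equiv 2 (Fin m → ℝ)).symm x)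
    have h5 : (0:ℝ) < ‖Matrix.toEuclideanLin (A t) ((WithLp.equiv 2 (Fin m → ℝ)).symm x)‖ :=
      lt_of_lt_of_le (mul_pos hc hxnorm) h4
    positivity
  have hdet : ∀ t ∈ I, IsUnit (B t).det := fun t ht => ((hpos t ht).det_pos.ne').isUnit
  set L : ℝ → Matrix (Fin m) (Fin n) ℝ := fun t => (B t)⁻¹ * (A t)ᵀ with hL
  have hLA : ∀ t ∈ I, L t * A t = 1 := by
    intro t ht
    show (B t)⁻¹ * (A t)ᵀ * A t = 1
    rw [Matrix.mul_assoc]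
    exact Matrix.nonsing_inv_mul (B t) (hdet t ht)
  refine ⟨L, ?_, fun t ht => ⟨hLA t ht, ?_⟩⟩
  · -- continuity
    have hf : Continuous (fun M : Matrix (Fin n) (Fin m) ℝ => Mᵀ * M) :=
      (continuous_id.matrix_transpose).matrix_mul continuous_id
    have hBc : ContinuousOn B I := hf.comp_continuousOn hA
    have hdetc : ContinuousOn (fun t => (B t).det) I :=
      (continuous_id.matrix_det).comp_continuousOn hBc
    have hinvc : ContinuousOn (fun t => ((B t).det)⁻¹) I :=
      hdetc.inv₀ fun t ht => (hdet t ht).ne_zero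
    have hg : Continuous (fun M : Matrix (Fin n) (Fin m) ℝ => (Mᵀ * M).adjugate * Mᵀ) :=
      (hf.matrix_adjugate).matrix_mul continuous_id.matrix_transpose
    have : ContinuousOn (fun t => ((B t).det)⁻¹ • ((B t).adjugate * (A t)ᵀ)) I :=
      hinvc.smul (hg.comp_continuousOn hA)
    refine this.congr fun t ht => ?_
    show (B t)⁻¹ * (A t)ᵀ = (B t).det⁻¹ • ((B t).adjugate * (A t)ᵀ)
    rw [Matrix.inv_def, Ring.inverse_eq_inv, Matrix.smul_mul]
  · -- norm bound
    refine Real.sSup_le ?_ (by positivity)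
    rintro r ⟨x, hx1, rfl⟩
    set z := Matrix.toEuclideanLin (L t) x with hz
    have h1 : c * ‖z‖ ≤ ‖Matrix.toEuclideanLin (A t) z‖ := hstretch t ht z
    set P : Matrix (Fin n) (Fin n) ℝ := A t * L t with hP
    have h2 : Matrix.toEuclideanLin (A t) z = Matrix.toEuclideanLin P x := by
      rw [hz, hP]
      show (WithLp.equiv 2 (Fin n → ℝ)).symm (A t *ᵥ (L t *ᵥ (WithLp.equiv 2 _ x)))
        = (WithLp.equiv 2 (Fin n → ℝ)).symm ((A t * L t) *ᵥ (WithLp.equiv 2 _ x))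
      rw [Matrix.mulVec_mulVec]
    have hBt : (B t)ᵀ = B t := by
      rw [hB]; simp [Matrix.transpose_mul]
    have hPt : Pᵀ = P := by
      show (A t * ((B t)⁻¹ * (A t)ᵀ))ᵀ = A t * ((B t)⁻¹ * (A t)ᵀ)
      rw [Matrix.transpose_mul, Matrix.transpose_mul, Matrix.transpose_transpose,
        Matrix.transpose_nonsing_inv, hBt, Matrix.mul_assoc]
    have hP2 : P * P = P := by
      show A t * L t * (A t * L t) = A t * L t
      rw [Matrix.mul_assoc, ← Matrix.mul_assoc (L t), hLA t ht, Matrix.one_mul]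
    have h3 : ‖Matrix.toEuclideanLin P x‖ ≤ 1 := by
      simpa [hx1] using norm_projmat_le P hPt hP2 x
    rw [le_div_iff₀ hc, mul_comm]
    calc c * ‖z‖ ≤ ‖Matrix.toEuclideanLin (A t) z‖ := h1
      _ ≤ 1 := by rw [h2]; exact h3
end
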